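/- Let (X,d) be a complete metric space and T : X → X satisfy: there are constants a, b, c with 0 < a < 1, a + b = 1, 0 ≤ c < 1/2, and d(T x, T y) ≤ a · max(d(x,y), c·(d(x,T y)+d(y,T x))) + b · max(d(x,T x), d(y,T y)) for all x, y ∈ X. Suppose (z_n) is a sequence in X with d(z_{n+1}, T z_{n+1}) ≤ K · d(z_n, T z_n) for some 0 ≤ K < 1 and all n. Then (z_n) is a Cauchy sequence. -/

import Mathlib

theorem stmt_5 {X : Type*} [MetricSpace X] [CompleteSpace X] (T : X → X) (a b c : ℝ)
    (ha0 : 0 < a) (ha1 : a < 1) (hab : a + b = 1) (hc0 : 0 ≤ c) (hc : c < 1/2)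
    (hT : ∀ x y : X, dist (T x) (T y) ≤
      a * max (dist x y) (c * (dist x (T y) + dist y (T x))) +
      b * max (dist x (T x)) (dist y (T y)))
    (z : ℕ → X) (K : ℝ) (hK0 : 0 ≤ K) (hK1 : K < 1)
    (hz : ∀ n : ℕ, dist (z (n+1)) (T (z (n+1))) ≤ K * dist (z n) (T (z n))) :
    CauchySeq z := by
  have ha1' : (0:ℝ) < 1 - a := by linarith
  -- key lemma
  have lem : ∀ x y : X, dist x y ≤ 2 / (1 - a) * (dist x (T x) + dist y (T y)) := by
    intro x y
    set s := dist x (T x) + dist y (T y) with hs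
    have hsnn : 0 ≤ s := by positivity
    have hd : dist x y ≤ dist x (T x) + dist (T x) (T y) + dist (T y) y :=
      (dist_triangle4 x (T x) (T y) y)
    have hmax1 : max (dist x y) (c * (dist x (T y) + dist y (T x))) ≤ dist x y + s := by
      apply max_le
      · linarith
      · have h1 : dist x (T y) ≤ dist x y + dist y (T y) := dist_triangle x y (T y)
        have h2 : dist y (T x) ≤ dist y x + dist x (T x) := dist_triangle y x (T x)
        rw [dist_comm y x] at h2
        have : c * (dist x (T y) + dist y (T x)) ≤ c * (2 * dist x y + s) := by
          apply mul_le_mul_of_nonneg_left _ hc0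
          rw [hs]; linarith
        have hdnn : 0 ≤ dist x y := dist_nonneg
        nlinarith
    have hmax2 : max (dist x (T x)) (dist y (T y)) ≤ s := by
      apply max_le <;> [linarith [dist_nonneg (x := y) (y := T y)];
        linarith [dist_nonneg (x := x) (y := T x)]]
    have h := hT x y
    have hb0 : 0 ≤ b := by linarith
    have key : dist x y ≤ s + a * (dist x y + s) + b * s := by
      have h1 : a * max (dist x y) (c * (dist x (T y) + dist y (T x))) ≤
          a * (dist x y + s) := mul_le_mul_of_nonneg_left hmax1 ha0.le
      have h2 : b * max (dist x (T x)) (dist y (T y)) ≤ b * s :=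
        mul_le_mul_of_nonneg_left hmax2 hb0
      rw [dist_comm (T y) y] at hd
      linarith
    -- (1-a) d ≤ (1+a+b) s = 2 s
    rw [div_mul_eq_mul_div, le_div_iff₀ ha1']
    nlinarith
  set c0 := dist (z 0) (T (z 0)) with hc0def
  have hc0nn : 0 ≤ c0 := dist_nonneg
  have hgeo : ∀ n, dist (z n) (T (z n)) ≤ K ^ n * c0 := by
    intro n
    induction n with
    | zero => simp [hc0def]
    | succ n ih =>
      calc dist (z (n+1)) (T (z (n+1))) ≤ K * dist (z n) (T (z n)) := hz n
        _ ≤ K * (K ^ n * c0) := mul_le_mul_of_nonneg_left ih hK0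
        _ = K ^ (n+1) * c0 := by ring
  have Cnn : 0 ≤ 2 / (1 - a) := by positivity
  apply cauchySeq_of_le_tendsto_0 (fun N => 2 / (1 - a) * (2 * (K ^ N * c0)))
  · intro n m N hn hm
    have hKn : K ^ n ≤ K ^ N := pow_le_pow_of_le_one hK0 hK1.le hn
    have hKm : K ^ m ≤ K ^ N := pow_le_pow_of_le_one hK0 hK1.le hm
    calc dist (z n) (z m) ≤ 2 / (1 - a) * (dist (z n) (T (z n)) + dist (z m) (T (z m))) :=
          lem (z n) (z m)
      _ ≤ 2 / (1 - a) * (2 * (K ^ N * c0)) := by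
          apply mul_le_mul_of_nonneg_left _ Cnn
          have h1 := hgeo n
          have h2 := hgeo m
          nlinarith
  · have hpow : Filter.Tendsto (fun N => K ^ N) Filter.atTop (nhds 0) :=
      tendsto_pow_atTop_nhds_zero_of_lt_one hK0 hK1
    have := (hpow.const_mul c0).const_mul (2 / (1 - a) * 2)
    simpa [mul_assoc, mul_comm, mul_left_comm] using this
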